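/- Let à ⊆ A be rings with à integrally closed in A, and let x ∈ A \ Ã. Then there exist a prime ideal 𝔭 of A and a valuation v on K = Frac(A/𝔭) such that the composite à → A → K factors through the valuation ring O_v and v(x̄) < 0, where x̄ is the image of x in K. -/

import Mathlib

/-!
STATEMENT 14: Let `Ã ⊆ A` be rings with `Ã` integrally closed in `A`, and let
`x ∈ A \ Ã`.  Then there exist a prime ideal `𝔭` of `A` and a valuation `v` on
`K = Frac(A/𝔭)` such that the composite `Ã → A → K` factors through the valuation
ring `O_v` and `v(x̄) < 0` (i.e. the image of `x` does not lie in `O_v`).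
-/

universe u

/-- Data of a "place" of a commutative ring `A`: a field `K`, a ring homomorphism
`A → K` and a valuation subring of `K`. -/
structure PlaceData (A : Type u) [CommRing A] : Type (u + 1) where
  K : Type u
  [fieldK : Field K]
  f : A →+* K
  O : ValuationSubring K

attribute [instance] PlaceData.fieldK

set_option maxHeartbeats 1000000 in
set_option synthInstance.maxHeartbeats 400000 in
open Polynomial in
theorem exists_valuation_negative_on_nonintegral
    {A : Type u} [CommRing A] (T : Subring A)
    -- `T` is integrally closed in `A`
    (hT : ∀ x : A, T.subtype.IsIntegralElem x → x ∈ T)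
    (x : A) (hx : x ∉ T) :
    ∃ D : PlaceData A,
      -- the kernel of `A → K` is a prime ideal `𝔭`, and `K = Frac(A/𝔭)`
      (∃ 𝔭 : Ideal A, 𝔭 = RingHom.ker D.f ∧ 𝔭.IsPrime) ∧
      (∀ z : D.K, ∃ a b : A, D.f b ≠ 0 ∧ z * D.f b = D.f a) ∧
      -- `Ã → A → K` factors through the valuation ring
      (∀ t : A, t ∈ T → D.f t ∈ D.O) ∧
      -- `v(x̄) < 0`
      D.f x ∉ D.O := by
  classical
  set M : Submonoid A := Submonoid.powers x with hM
  let Aₓ := Localization M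
  let φ : A →+* Aₓ := algebraMap A Aₓ
  letI : Algebra T Aₓ := (φ.comp T.subtype).toAlgebra
  set y : Aₓ := IsLocalization.mk' Aₓ (1 : A) ⟨x, Submonoid.mem_powers x⟩ with hy
  have hy1' : y * φ x = φ 1 := IsLocalization.mk'_spec Aₓ (1 : A) (⟨x, Submonoid.mem_powers x⟩ : M)
  have hy1 : φ x * y = 1 := by rw [mul_comm, hy1', map_one]
  set Bs : Subring Aₓ := (Algebra.adjoin T {y}).toSubring with hBs
  have hyBs : y ∈ Bs := Algebra.self_mem_adjoin_singleton T y
  -- y is not a unit in Bs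
  have hy_nonunit : (⟨y, hyBs⟩ : Bs) ∈ nonunits Bs := by
    intro hu
    obtain ⟨w, hw⟩ := isUnit_iff_exists_inv.mp hu
    have hw' : y * (w : Aₓ) = 1 := congrArg Subtype.val hw
    have hwx : (w : Aₓ) = φ x := by
      calc (w : Aₓ) = (φ x * y) * w := by rw [hy1, one_mul]
        _ = φ x * (y * w) := by ring
        _ = φ x := by rw [hw', mul_one]
    have hφxBs : φ x ∈ (Algebra.adjoin T {y} : Subalgebra T Aₓ) := hwx ▸ w.2
    rw [Algebra.adjoin_singleton_eq_range_aeval] at hφxBs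
    obtain ⟨p, hp0⟩ := hφxBs
    have hp : Polynomial.aeval y p = φ x := hp0
    set n := p.natDegree with hn
    set a : A := ∑ i ∈ Finset.range (n + 1), ((p.coeff i : A) * x ^ (n - i)) with ha
    have key : φ (x ^ (n + 1)) = φ a := by
      calc φ (x ^ (n + 1)) = φ x ^ n * φ x := by rw [map_pow, pow_succ]
        _ = φ x ^ n * Polynomial.aeval y p := by rw [hp]
        _ = ∑ i ∈ Finset.range (n + 1),
              algebraMap T Aₓ (p.coeff i) * (φ x ^ n * y ^ i) := by
            rw [Polynomial.aeval_def, Polynomial.eval₂_eq_sum_range, Finset.mul_sum]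
            exact Finset.sum_congr rfl fun i _ => by ring
        _ = ∑ i ∈ Finset.range (n + 1), φ ((p.coeff i : A) * x ^ (n - i)) := by
            refine Finset.sum_congr rfl fun i hi => ?_
            have hin : i ≤ n := Nat.lt_succ_iff.mp (Finset.mem_range.mp hi)
            have h1 : φ x ^ n * y ^ i = φ x ^ (n - i) := by
              have h2 : φ x ^ n = φ x ^ (n - i) * φ x ^ i := by
                rw [← pow_add, Nat.sub_add_cancel hin]
              rw [h2, mul_assoc, ← mul_pow, hy1, one_pow, mul_one]
            rw [h1, map_mul, map_pow]
            rfl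
        _ = φ a := by rw [ha, map_sum]
    obtain ⟨c, hc⟩ := (IsLocalization.eq_iff_exists M Aₓ).mp key
    obtain ⟨k, hk⟩ := c.2
    rw [← hk] at hc
    have hc' : x ^ k * x ^ (n + 1) = x ^ k * a := hc
    -- the integral equation
    set q : Polynomial T :=
      X ^ (k + n + 1) - ∑ i ∈ Finset.range (n + 1), C (p.coeff i) * X ^ (k + (n - i)) with hq
    have hmonic : q.Monic := by
      refine monic_X_pow_sub ?_
      refine lt_of_le_of_lt (Polynomial.degree_sum_le _ _) ?_
      rw [Finset.sup_lt_iff (by exact_mod_cast WithBot.bot_lt_coe (k + n + 1))]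
      intro i hi
      have hin : i ≤ n := Nat.lt_succ_iff.mp (Finset.mem_range.mp hi)
      refine lt_of_le_of_lt (Polynomial.degree_C_mul_X_pow_le _ _) ?_
      exact_mod_cast Nat.lt_succ_of_le (by omega)
    have heval : Polynomial.eval₂ T.subtype x q = 0 := by
      rw [hq]
      simp only [Polynomial.eval₂_sub, Polynomial.eval₂_X_pow, Polynomial.eval₂_finset_sum,
        Polynomial.eval₂_mul, Polynomial.eval₂_C, Polynomial.eval₂_X_pow]
      have h3 : (x : A) ^ (k + n + 1) = x ^ k * x ^ (n + 1) := by rw [← pow_add]; ring_nf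
      have h4 : ∑ i ∈ Finset.range (n + 1), (T.subtype (p.coeff i)) * x ^ (k + (n - i))
          = x ^ k * a := by
        rw [ha, Finset.mul_sum]
        refine Finset.sum_congr rfl fun i hi => ?_
        rw [pow_add]
        simp only [Subring.coe_subtype]
        ring
      rw [h3, h4, hc', sub_self]
    exact hx (hT x ⟨q, hmonic, heval⟩)
  obtain ⟨m, hm, hym⟩ := exists_max_ideal_of_mem_nonunits hy_nonunit
  haveI hmp : m.IsPrime := hm.isPrime
  -- the image of the complement of m, as a submonoid of Aₓ
  set M₂ : Submonoid Aₓ := Submonoid.map (Bs.subtype : Bs →+* Aₓ).toMonoidHom m.primeCompl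
    with hM₂
  have hdisj : Disjoint ((⊥ : Ideal Aₓ) : Set Aₓ) (M₂ : Set Aₓ) := by
    rw [Set.disjoint_left]
    rintro z hz0 ⟨b, hb, hbz⟩
    have : z = 0 := by simpa using hz0
    have hb0 : b = 0 := Subtype.ext (by simpa [this] using hbz)
    exact hb (hb0 ▸ m.zero_mem)
  obtain ⟨𝔮, h𝔮prime, -, h𝔮disj⟩ := Ideal.exists_le_prime_disjoint (I := ⊥) M₂ hdisj
  haveI := h𝔮prime
  let Dq := Aₓ ⧸ 𝔮
  let K := FractionRing Dq
  let ψ : Aₓ →+* K := (algebraMap Dq K).comp (Ideal.Quotient.mk 𝔮)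
  let f : A →+* K := ψ.comp φ
  have hψ0 : ∀ z : Aₓ, ψ z = 0 ↔ z ∈ 𝔮 := by
    intro z
    rw [show ψ z = algebraMap Dq K (Ideal.Quotient.mk 𝔮 z) from rfl,
      map_eq_zero_iff _ (IsFractionRing.injective Dq K), Ideal.Quotient.eq_zero_iff_mem]
  have hφx𝔮 : φ x ∉ 𝔮 := by
    intro h
    exact h𝔮prime.ne_top (Ideal.eq_top_of_isUnit_mem _ h
      (IsLocalization.map_units Aₓ (⟨x, Submonoid.mem_powers x⟩ : M)))
  have hfx0 : ψ (φ x) ≠ 0 := fun h => hφx𝔮 ((hψ0 _).mp h)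
  have hy𝔮 : y ∉ 𝔮 := by
    intro h
    exact h𝔮prime.ne_top (Ideal.eq_top_of_isUnit_mem _ h
      (IsUnit.of_mul_eq_one (a := y) (φ x) (by rw [mul_comm]; exact hy1)))
  -- the image of Bs in K
  let ρ : Bs →+* K := ψ.comp Bs.subtype
  let B' : Subring K := ρ.range
  let g : Bs →+* B' := ρ.rangeRestrict
  have hg : Function.Surjective g := ρ.rangeRestrict_surjective
  have hker : RingHom.ker g ≤ m := by
    intro b hb
    have hρb : ρ b = 0 := congrArg Subtype.val hb
    have hb𝔮 : (b : Aₓ) ∈ 𝔮 := (hψ0 _).mp hρb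
    by_contra hbm
    exact Set.disjoint_left.mp h𝔮disj hb𝔮 ⟨b, hbm, rfl⟩
  haveI hm' : (m.map g).IsPrime := Ideal.map_isPrime_of_surjective hg hker
  let L := LocalSubring.ofPrime B' (m.map g)
  obtain ⟨O, hle, hloc⟩ := LocalSubring.exists_le_valuationSubring L
  refine ⟨⟨K, f, O⟩, ⟨RingHom.ker f, rfl, RingHom.ker_isPrime f⟩, ?_, ?_, ?_⟩
  · -- fraction-field property
    intro z
    obtain ⟨⟨u, v⟩, hz⟩ := IsLocalization.surj (nonZeroDivisors Dq) z
    obtain ⟨u', hu'⟩ := Ideal.Quotient.mk_surjective (I := 𝔮) u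
    obtain ⟨v', hv'⟩ := Ideal.Quotient.mk_surjective (I := 𝔮) v.1
    obtain ⟨⟨a, cu⟩, hu2⟩ := IsLocalization.surj M u'
    obtain ⟨⟨b, cv⟩, hv2⟩ := IsLocalization.surj M v'
    obtain ⟨kk, hkk⟩ := cu.2
    obtain ⟨ll, hll⟩ := cv.2
    rw [← hkk] at hu2
    rw [← hll] at hv2
    refine ⟨a * x ^ ll, b * x ^ kk, ?_, ?_⟩
    · have hv0 : ψ v' ≠ 0 := by
        intro h
        have hq : v' ∈ 𝔮 := (hψ0 v').mp h
        have : v.1 = 0 := by rw [← hv', Ideal.Quotient.eq_zero_iff_mem]; exact hq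
        exact nonZeroDivisors.coe_ne_zero v this
      have hb' : f b = ψ v' * ψ (φ x) ^ ll := by
        have := congrArg ψ hv2
        simp only [map_mul, map_pow] at this
        rw [show f b = ψ (φ b) from rfl, ← this]
      have : f (b * x ^ kk) = ψ v' * ψ (φ x) ^ ll * ψ (φ x) ^ kk := by
        have e1 : f (b * x ^ kk) = f b * ψ (φ x) ^ kk := by
          simp only [map_mul, map_pow]; rfl
        rw [e1, hb']
      rw [this]
      exact mul_ne_zero (mul_ne_zero hv0 (pow_ne_zero _ hfx0)) (pow_ne_zero _ hfx0)
    · have hψv : ψ v' = algebraMap Dq K v.1 := by rw [show ψ v' = algebraMap Dq K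
        (Ideal.Quotient.mk 𝔮 v') from rfl, hv']
      have hψu : ψ u' = algebraMap Dq K u := by rw [show ψ u' = algebraMap Dq K
        (Ideal.Quotient.mk 𝔮 u') from rfl, hu']
      have h2 : algebraMap Dq K v.1 * ψ (φ x) ^ ll = f b := by
        have := congrArg ψ hv2
        simp only [map_mul, map_pow] at this
        rw [← hψv, this]; rfl
      have h3 : algebraMap Dq K u * ψ (φ x) ^ kk = f a := by
        have := congrArg ψ hu2
        simp only [map_mul, map_pow] at this
        rw [← hψu, this]; rfl
      have hfb : f (b * x ^ kk) = f b * ψ (φ x) ^ kk := by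
        simp only [map_mul, map_pow]; rfl
      have hfa : f (a * x ^ ll) = f a * ψ (φ x) ^ ll := by
        simp only [map_mul, map_pow]; rfl
      calc z * f (b * x ^ kk) = z * (algebraMap Dq K v.1 * ψ (φ x) ^ ll * ψ (φ x) ^ kk) := by
            rw [hfb, ← h2]
        _ = (z * algebraMap Dq K v.1) * (ψ (φ x) ^ ll * ψ (φ x) ^ kk) := by ring
        _ = algebraMap Dq K u * (ψ (φ x) ^ ll * ψ (φ x) ^ kk) := by rw [hz]
        _ = (algebraMap Dq K u * ψ (φ x) ^ kk) * ψ (φ x) ^ ll := by ring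
        _ = f a * ψ (φ x) ^ ll := by rw [h3]
        _ = f (a * x ^ ll) := by rw [hfa]
  · -- T lands in O
    intro t ht
    have hφt : φ t ∈ Bs := by
      have : algebraMap T Aₓ ⟨t, ht⟩ ∈ (Algebra.adjoin T {y} : Subalgebra T Aₓ) :=
        Subalgebra.algebraMap_mem _ _
      exact this
    have hft : f t ∈ B' := ⟨⟨φ t, hφt⟩, rfl⟩
    exact hle (LocalSubring.le_ofPrime B' (m.map g) hft)
  · -- f x ∉ O
    intro hfx
    have hyB' : ψ y ∈ B' := ⟨⟨y, hyBs⟩, rfl⟩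
    have hym' : (⟨ψ y, hyB'⟩ : B') ∈ m.map g := by
      have hgy : g ⟨y, hyBs⟩ = ⟨ψ y, hyB'⟩ := rfl
      exact hgy ▸ Ideal.mem_map_of_mem g hym
    have hnonunit : ¬ IsUnit (algebraMap B' L.toSubring ⟨ψ y, hyB'⟩) := by
      rw [IsLocalization.AtPrime.isUnit_to_map_iff L.toSubring (m.map g)]
      exact fun h => h hym'
    set e₁ : L.toSubring := algebraMap B' L.toSubring ⟨ψ y, hyB'⟩ with he₁
    have he₁v : (e₁ : K) = ψ y := rfl
    have hyO : ψ y ∈ O.toSubring := hle (he₁v ▸ e₁.2)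
    have hmul : ψ y * f x = 1 := by
      rw [show f x = ψ (φ x) from rfl, ← map_mul, mul_comm y (φ x), hy1, map_one]
    have hu : IsUnit (Subring.inclusion hle e₁) := by
      refine IsUnit.of_mul_eq_one ⟨f x, hfx⟩ (Subtype.ext ?_)
      exact hmul
    exact hnonunit (hloc.map_nonunit _ hu)
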